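/- Let M be the formal power series over ℤ with constant term 1 satisfying M = 1 + X·M + X²·M² (the generating function of the Motzkin numbers), and for k ≥ 0 let C_k = Σ_{n≥0} b_{n,k} X^n, where b_{n,k} is the number of permutations π ∈ S_{n+1} that avoid both generalized patterns 1-23 and 21-3 and satisfy π_{n+1} = k+1. Then C_0 = M, and for every k ≥ 1, C_k = X^{2(k-1)} · M^{k-1} · (M - 1). -/

import Mathlib

/-- `π` avoids the generalized pattern 1-23. -/
def Avoids1d23 {n : ℕ} (π : Equiv.Perm (Fin n)) : Prop :=
  ¬ ∃ (i j : Fin n) (h : j.1 + 1 < n), i < j ∧ π i < π j ∧ π j < π ⟨j.1 + 1, h⟩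

/-- `π` avoids the generalized pattern 21-3. -/
def Avoids21d3 {n : ℕ} (π : Equiv.Perm (Fin n)) : Prop :=
  ¬ ∃ (i j : Fin n) (h : i.1 + 1 < n), i.1 + 1 < j.1 ∧ π ⟨i.1 + 1, h⟩ < π i ∧ π i < π j

/-- `a n k` is the number of permutations of `S n` avoiding both `1-23` and `21-3`
whose last entry equals `k`. -/
noncomputable def a (n k : ℕ) : ℕ :=
  Nat.card {π : Equiv.Perm (Fin n) // Avoids1d23 π ∧ Avoids21d3 π ∧
    ∃ h : n - 1 < n, (π ⟨n - 1, h⟩).1 + 1 = k}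

namespace ClMa

def uval {m : ℕ} (U : Equiv.Perm (Fin m)) (j : ℕ) : ℕ :=
  if h : j < m then (U ⟨j, h⟩).1 else m

lemma uval_lt {m : ℕ} (U : Equiv.Perm (Fin m)) {j : ℕ} (h : j < m) : uval U j < m := by
  simp only [uval, dif_pos h]; exact (U ⟨j, h⟩).2

lemma uval_inj {m : ℕ} (U : Equiv.Perm (Fin m)) {i j : ℕ} (hi : i < m) (hj : j < m)
    (h : uval U i = uval U j) : i = j := by
  simp only [uval, dif_pos hi, dif_pos hj] at h
  have := U.injective (Fin.val_injective h)
  simpa using congrArg Fin.val this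

lemma uval_exists_zero {m : ℕ} (U : Equiv.Perm (Fin m)) (h : 0 < m) :
    ∃ j, j < m ∧ uval U j = 0 := by
  refine ⟨(U.symm ⟨0, h⟩).1, (U.symm ⟨0, h⟩).2, ?_⟩
  simp [uval, (U.symm ⟨0, h⟩).2]

lemma lt_iff_uval {m : ℕ} (π : Equiv.Perm (Fin m)) {p q : ℕ} (hp : p < m) (hq : q < m) :
    π ⟨p, hp⟩ < π ⟨q, hq⟩ ↔ uval π p < uval π q := by
  simp only [uval, dif_pos hp, dif_pos hq, Fin.lt_def]

def Good {m : ℕ} (U : Equiv.Perm (Fin m)) : Prop :=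
  ∀ j : ℕ, j + 1 < m →
    (uval U j < uval U (j + 1) → ∀ i < j, uval U j < uval U i) ∧
    (uval U (j + 1) < uval U j → ∀ l < m, j + 1 < l → uval U l < uval U j)

lemma good_iff {m : ℕ} (π : Equiv.Perm (Fin m)) :
    (Avoids1d23 π ∧ Avoids21d3 π) ↔ Good π := by
  unfold Avoids1d23 Avoids21d3 Good
  constructor
  · rintro ⟨h1, h2⟩ j hj
    have hjm : j < m := by omega
    constructor
    · intro hasc i hij
      have him : i < m := by omega
      by_contra hcon
      push_neg at hcon
      have hne : uval π i ≠ uval π j := fun h => by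
        have := uval_inj π him hjm h; omega
      have hlt : uval π i < uval π j := by omega
      exact h1 ⟨⟨i, him⟩, ⟨j, hjm⟩, hj, by simpa using hij,
        (lt_iff_uval π him hjm).2 hlt, (lt_iff_uval π hjm hj).2 hasc⟩
    · intro hdesc l hl hjl
      by_contra hcon
      push_neg at hcon
      have hne : uval π l ≠ uval π j := fun h => by
        have := uval_inj π hl hjm h; omega
      have hlt : uval π j < uval π l := by omega
      exact h2 ⟨⟨j, hjm⟩, ⟨l, hl⟩, hj, by simpa using hjl,
        (lt_iff_uval π hj hjm).2 hdesc, (lt_iff_uval π hjm hl).2 hlt⟩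
  · intro hg
    constructor
    · rintro ⟨i, j, h, hij, hij2, hj3⟩
      have hjm : j.1 < m := j.2
      have h' := (hg j.1 h).1 ((lt_iff_uval π hjm h).1 (by simpa using hj3)) i.1 hij
      rw [← lt_iff_uval π hjm i.2] at h'
      simp only [Fin.eta] at h'
      exact absurd hij2 (not_lt.2 h'.le)
    · rintro ⟨i, j, h, hij, hd, hl⟩
      have h' := (hg i.1 h).2 ((lt_iff_uval π h i.2).1 (by simpa using hd)) j.1 j.2 hij
      rw [← lt_iff_uval π j.2 i.2] at h'
      simp only [Fin.eta] at h'
      exact absurd hl (not_lt.2 h'.le)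

variable {m : ℕ}

def app (U : Equiv.Perm (Fin m)) (w0 : Fin (m + 1)) : Equiv.Perm (Fin (m + 1)) :=
  ((finSuccEquiv' (Fin.last m)).trans (Equiv.optionCongr U)).trans (finSuccEquiv' w0).symm

lemma app_last (U : Equiv.Perm (Fin m)) (w0 : Fin (m + 1)) : app U w0 (Fin.last m) = w0 := by
  simp [app, finSuccEquiv'_at, finSuccEquiv'_symm_none]

lemma app_castSucc (U : Equiv.Perm (Fin m)) (w0 : Fin (m + 1)) (i : Fin m) :
    app U w0 (Fin.castSucc i) = w0.succAbove (U i) := by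
  simp only [app, Equiv.trans_apply]
  rw [show finSuccEquiv' (Fin.last m) (Fin.castSucc i) = some i from ?_]
  · simp [finSuccEquiv'_symm_some]
  · rw [← Fin.succAbove_last, finSuccEquiv'_succAbove]

lemma val_succAbove (p : Fin (m + 1)) (i : Fin m) :
    (p.succAbove i).1 = if i.1 < p.1 then i.1 else i.1 + 1 := by
  rw [Fin.succAbove]
  split_ifs with h1 h2 h3
  · rfl
  · exact absurd (by exact_mod_cast h1) h2
  · exact absurd (by exact_mod_cast h3) h1
  · rfl

lemma uval_app (U : Equiv.Perm (Fin m)) (w0 : Fin (m + 1)) {j : ℕ} (hj : j < m) :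
    uval (app U w0) j = if uval U j < w0.1 then uval U j else uval U j + 1 := by
  have hj1 : j < m + 1 := by omega
  simp only [uval, dif_pos hj1, dif_pos hj]
  rw [show (⟨j, hj1⟩ : Fin (m + 1)) = Fin.castSucc ⟨j, hj⟩ from rfl, app_castSucc,
    val_succAbove]

lemma uval_app_last (U : Equiv.Perm (Fin m)) (w0 : Fin (m + 1)) :
    uval (app U w0) m = w0.1 := by
  simp only [uval, dif_pos (Nat.lt_succ_self m)]
  rw [show (⟨m, Nat.lt_succ_self m⟩ : Fin (m + 1)) = Fin.last m from rfl, app_last]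

def OkP {m : ℕ} (U : Equiv.Perm (Fin m)) (w : ℕ) : Prop :=
  w ≤ m + 1 ∧ (∀ j : ℕ, j + 1 < m → uval U (j + 1) < uval U j → w ≤ uval U j + 1) ∧
  (0 < m → uval U (m - 1) ≠ 0 → w ≤ uval U (m - 1) + 1)

def BE {m : ℕ} (U : Equiv.Perm (Fin m)) : Prop := m = 0 ∨ uval U (m - 1) = 0


/-- a strict minimum at the last position has value 0 -/
lemma last_min_zero (U : Equiv.Perm (Fin m)) (hm : 0 < m)
    (h : ∀ i < m - 1, uval U (m - 1) < uval U i) : uval U (m - 1) = 0 := by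
  obtain ⟨j0, hj0, hz⟩ := uval_exists_zero U hm
  rcases eq_or_ne j0 (m - 1) with rfl | hne
  · exact hz
  · have := h j0 (by omega); omega

lemma uval_app_lt_iff (U : Equiv.Perm (Fin m)) (w0 : Fin (m + 1)) {i j : ℕ}
    (hi : i < m) (hj : j < m) :
    uval (app U w0) i < uval (app U w0) j ↔ uval U i < uval U j := by
  rw [uval_app U w0 hi, uval_app U w0 hj]; split_ifs <;> omega

lemma last_lt_uval_app_iff (U : Equiv.Perm (Fin m)) (w0 : Fin (m + 1)) {j : ℕ} (hj : j < m) :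
    uval (app U w0) m < uval (app U w0) j ↔ w0.1 ≤ uval U j := by
  rw [uval_app U w0 hj, uval_app_last]; split_ifs <;> omega

lemma uval_app_lt_last_iff (U : Equiv.Perm (Fin m)) (w0 : Fin (m + 1)) {j : ℕ} (hj : j < m) :
    uval (app U w0) j < uval (app U w0) m ↔ uval U j < w0.1 := by
  rw [uval_app U w0 hj, uval_app_last]; split_ifs <;> omega

lemma good_app_iff (U : Equiv.Perm (Fin m)) (w0 : Fin (m + 1)) :
    Good (app U w0) ↔ Good U ∧ OkP U (w0.1 + 1) := by
  have hw0 : w0.1 < m + 1 := w0.2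
  constructor
  · intro hg
    refine ⟨?_, by omega, ?_, ?_⟩
    · -- Good U
      intro j hj
      have hj1 : j + 1 < m + 1 := by omega
      obtain ⟨hga, hgd⟩ := hg j hj1
      constructor
      · intro hasc i hij
        have hi : i < m := by omega
        have h' := hga ((uval_app_lt_iff U w0 (by omega) hj).2 hasc) i hij
        rwa [uval_app_lt_iff U w0 (by omega) hi] at h'
      · intro hdesc l hl hjl
        have h' := hgd ((uval_app_lt_iff U w0 hj (by omega)).2 hdesc) l (by omega) hjl
        rwa [uval_app_lt_iff U w0 hl (by omega)] at h'
    · -- descent tops are ≥ w (1-indexed)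
      intro j hj hdesc
      have hj1 : j + 1 < m + 1 := by omega
      have h' := (hg j hj1).2 ((uval_app_lt_iff U w0 hj (by omega)).2 hdesc)
        m (by omega) (by omega)
      rw [last_lt_uval_app_iff U w0 (by omega)] at h'
      omega
    · -- last entry condition
      intro hm hne
      by_contra hcon
      have hlast : uval U (m - 1) < w0.1 := by omega
      have hj1 : (m - 1) + 1 < m + 1 := by omega
      have hasc : uval (app U w0) (m - 1) < uval (app U w0) ((m - 1) + 1) := by
        rw [show (m - 1) + 1 = m from by omega]
        exact (uval_app_lt_last_iff U w0 (by omega)).2 hlast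
      have h' := (hg (m - 1) hj1).1 hasc
      have hmin : ∀ i < m - 1, uval U (m - 1) < uval U i := by
        intro i hi
        have := h' i hi
        rwa [uval_app_lt_iff U w0 (by omega) (by omega)] at this
      exact hne (last_min_zero U hm hmin)
  · rintro ⟨hgU, -, hdt, hlast⟩
    intro j hj1
    rcases lt_or_ge (j + 1) m with hj | hj
    · -- interior pair
      obtain ⟨hga, hgd⟩ := hgU j hj
      constructor
      · intro hasc i hij
        rw [uval_app_lt_iff U w0 (by omega) hj] at hasc
        rw [uval_app_lt_iff U w0 (by omega) (by omega)]
        exact hga hasc i hij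
      · intro hdesc l hl hjl
        rw [uval_app_lt_iff U w0 hj (by omega)] at hdesc
        rcases lt_or_ge l m with hlm | hlm
        · rw [uval_app_lt_iff U w0 hlm (by omega)]
          exact hgd hdesc l hlm hjl
        · have hl' : l = m := by omega
          subst hl'
          rw [last_lt_uval_app_iff U w0 (by omega)]
          have := hdt j hj hdesc
          omega
    · -- boundary pair (j = m-1, j+1 = m)
      have hjm : j = m - 1 := by omega
      have hm : 0 < m := by omega
      constructor
      · intro hasc i hij
        rw [show j + 1 = m from by omega] at hasc
        rw [uval_app_lt_last_iff U w0 (by omega)] at hasc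
        have hz : uval U j = 0 := by
          by_contra hz
          have h2 := hlast hm (by rw [show m - 1 = j from by omega]; exact hz)
          rw [show m - 1 = j from by omega] at h2
          omega
        rw [uval_app_lt_iff U w0 (by omega) (by omega)]
        have hiz : uval U i ≠ uval U j := fun h => by
          have := uval_inj U (show i < m by omega) (show j < m by omega) h
          omega
        omega
      · intro _ l hl hjl
        omega

lemma okp_one (U : Equiv.Perm (Fin m)) : OkP U 1 :=
  ⟨by omega, fun _ _ _ => by omega, fun _ _ => by omega⟩

lemma okp_two (U : Equiv.Perm (Fin m)) (hm : 1 ≤ m) : OkP U 2 :=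
  ⟨by omega, fun j hj hd => by omega, fun _ h => by omega⟩

lemma okp_mono (U : Equiv.Perm (Fin m)) {v w : ℕ} (hvw : v ≤ w) (h : OkP U w) : OkP U v :=
  ⟨by have := h.1; omega, fun j hj hd => by have := h.2.1 j hj hd; omega,
   fun hm hne => by have := h.2.2 hm hne; omega⟩

lemma be_app_iff (U : Equiv.Perm (Fin m)) (w0 : Fin (m + 1)) :
    BE (app U w0) ↔ w0.1 = 0 := by
  unfold BE
  rw [show m + 1 - 1 = m from by omega, uval_app_last]
  omega

lemma okp_app_iff_pos (U : Equiv.Perm (Fin m)) (w0 : Fin (m + 1)) (hw : 1 ≤ w0.1)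
    (hU : OkP U (w0.1 + 1)) (v : ℕ) :
    OkP (app U w0) v ↔ v ≤ w0.1 + 1 := by
  constructor
  · intro h
    have := h.2.2 (by omega)
    rw [show m + 1 - 1 = m from by omega, uval_app_last] at this
    have := this (by omega)
    omega
  · intro hv
    refine ⟨by omega, ?_, ?_⟩
    · intro j hj hdesc
      rcases lt_or_ge (j + 1) m with hjm | hjm
      · rw [uval_app_lt_iff U w0 (by omega) (by omega)] at hdesc
        have h1 := hU.2.1 j (by omega) hdesc
        rw [uval_app U w0 (by omega)]
        split_ifs <;> omega
      · have hjm' : j + 1 = m := by omega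
        rw [hjm', last_lt_uval_app_iff U w0 (show j < m by omega)] at hdesc
        rw [uval_app U w0 (by omega)]
        split_ifs <;> omega
    · intro _ _
      rw [show m + 1 - 1 = m from by omega, uval_app_last]
      omega

lemma okp_app_iff_zero (U : Equiv.Perm (Fin m)) (w0 : Fin (m + 1)) (hw : w0.1 = 0)
    {v : ℕ} (hv : 3 ≤ v) :
    OkP (app U w0) v ↔ (¬ BE U ∧ OkP U (v - 1)) := by
  have huval : ∀ j : ℕ, j < m → uval (app U w0) j = uval U j + 1 := by
    intro j hj
    rw [uval_app U w0 hj]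
    split_ifs <;> omega
  constructor
  · intro h
    have hm : 0 < m := by
      by_contra hm
      have := h.1; omega
    have hlz : uval U (m - 1) ≠ 0 := by
      intro hz
      have hd : uval (app U w0) m < uval (app U w0) (m - 1) := by
        rw [uval_app_last, huval (m - 1) (by omega)]
        omega
      have := h.2.1 (m - 1) (by omega)
      rw [show (m - 1) + 1 = m from by omega] at this
      have := this hd
      rw [huval (m - 1) (by omega)] at this
      omega
    refine ⟨by unfold BE; omega, by have := h.1; omega, ?_, ?_⟩
    · intro j hj hdesc
      have hd : uval (app U w0) (j + 1) < uval (app U w0) j := by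
        rw [huval j (by omega), huval (j + 1) (by omega)]; omega
      have := h.2.1 j (by omega) hd
      rw [huval j (by omega)] at this
      omega
    · intro _ _
      have hd : uval (app U w0) m < uval (app U w0) (m - 1) := by
        rw [uval_app_last, huval (m - 1) (by omega)]
        omega
      have := h.2.1 (m - 1) (by omega)
      rw [show (m - 1) + 1 = m from by omega] at this
      have := this hd
      rw [huval (m - 1) (by omega)] at this
      omega
  · rintro ⟨hbe, hOk⟩
    have hm : 0 < m := by
      unfold BE at hbe; push_neg at hbe; omega
    have hlz : uval U (m - 1) ≠ 0 := by
      unfold BE at hbe; push_neg at hbe; exact hbe.2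
    refine ⟨by have := hOk.1; omega, ?_, ?_⟩
    · intro j hj hdesc
      rcases lt_or_ge (j + 1) m with hjm | hjm
      · rw [huval j (by omega), huval (j + 1) (by omega)] at hdesc
        have := hOk.2.1 j (by omega) (by omega)
        rw [huval j (by omega)]
        omega
      · have hjm' : j + 1 = m := by omega
        have := hOk.2.2 hm hlz
        rw [huval j (by omega)]
        rw [show m - 1 = j from by omega] at this
        omega
    · intro _ hne
      rw [show m + 1 - 1 = m from by omega, uval_app_last] at hne
      omega

lemma nat_card_sigma {ι : Type*} [Fintype ι] (F : ι → Type*) [∀ i, Finite (F i)] :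
    Nat.card (Σ i, F i) = ∑ i, Nat.card (F i) := by
  classical
  letI : ∀ i, Fintype (F i) := fun i => Fintype.ofFinite _
  simp [Nat.card_eq_fintype_card]

lemma card_decomp (m : ℕ) (Q : Equiv.Perm (Fin (m + 1)) → Prop) :
    Nat.card {π : Equiv.Perm (Fin (m + 1)) // Good π ∧ Q π}
      = ∑ w0 : Fin (m + 1),
          Nat.card {U : Equiv.Perm (Fin m) // (Good U ∧ OkP U (w0.1 + 1)) ∧ Q (app U w0)} := by
  rw [← nat_card_sigma]
  apply Nat.card_congr
  apply Equiv.symm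
  refine Equiv.ofBijective
    (fun x => ⟨app x.2.1 x.1, ((good_app_iff x.2.1 x.1).2 ⟨x.2.2.1.1, x.2.2.1.2⟩), x.2.2.2⟩)
    ⟨?_, ?_⟩
  · rintro ⟨w0, U, hU⟩ ⟨w0', U', hU'⟩ h
    have happ : app U w0 = app U' w0' := congrArg Subtype.val h
    have hw : w0 = w0' := by
      rw [← app_last U w0, ← app_last U' w0', happ]
    subst hw
    have hUU : U = U' := by
      apply Equiv.ext
      intro i
      apply Fin.succAbove_right_injective (p := w0)
      rw [← app_castSucc U w0 i, ← app_castSucc U' w0 i, happ]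
    subst hUU
    rfl
  · rintro ⟨π, hπG, hπQ⟩
    set w0 := π (Fin.last m) with hw0
    have hne : ∀ i : Fin m, π (Fin.castSucc i) ≠ w0 := by
      intro i h
      have := π.injective h
      exact absurd this (Fin.ne_last_of_lt (Fin.castSucc_lt_last i))
    have hex : ∀ i : Fin m, ∃ z : Fin m, w0.succAbove z = π (Fin.castSucc i) :=
      fun i => Fin.exists_succAbove_eq (hne i)
    choose g hg using hex
    have hginj : Function.Injective g := by
      intro i j h
      have : π (Fin.castSucc i) = π (Fin.castSucc j) := by
        rw [← hg i, ← hg j, h]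
      exact Fin.castSucc_injective m (π.injective this)
    let U : Equiv.Perm (Fin m) := Equiv.ofBijective g (Finite.injective_iff_bijective.mp hginj)
    have happ : app U w0 = π := by
      apply Equiv.ext
      intro x
      induction x using Fin.lastCases with
      | last => rw [app_last]
      | cast i => rw [app_castSucc]; exact hg i
    have hGO := (good_app_iff U w0).1 (by rw [happ]; exact hπG)
    exact ⟨⟨w0, U, ⟨hGO, by rw [happ]; exact hπQ⟩⟩, Subtype.ext happ⟩

noncomputable def Tc (n w : ℕ) : ℕ := Nat.card {U : Equiv.Perm (Fin n) // Good U ∧ OkP U w}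
noncomputable def Ac (n : ℕ) : ℕ := Nat.card {U : Equiv.Perm (Fin n) // Good U}
noncomputable def Rc (n u : ℕ) : ℕ :=
  Nat.card {U : Equiv.Perm (Fin n) // Good U ∧ (OkP U u ∧ ¬ BE U)}
noncomputable def Sc (n v : ℕ) : ℕ := ∑ w ∈ Finset.Icc v (n + 1), Tc n w

lemma card_iff_congr {α : Type*} {P Q : α → Prop} (h : ∀ x, P x ↔ Q x) :
    Nat.card {x // P x} = Nat.card {x // Q x} :=
  Nat.card_congr (Equiv.subtypeEquivRight h)

lemma tc_one (n : ℕ) : Tc n 1 = Ac n := by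
  unfold Tc Ac
  rw [card_iff_congr (fun U => ⟨fun h => h.1, fun h => ⟨h, okp_one U⟩⟩)]

lemma tc_two (n : ℕ) (hn : 1 ≤ n) : Tc n 2 = Ac n := by
  unfold Tc Ac
  rw [card_iff_congr (fun U => ⟨fun h => h.1, fun h => ⟨h, okp_two U hn⟩⟩)]

lemma tc_gt (n w : ℕ) (h : n + 1 < w) : Tc n w = 0 := by
  unfold Tc
  rw [Nat.card_eq_zero]
  left
  constructor
  rintro ⟨U, -, hw, -⟩
  omega

lemma okp_decide_of_true {n : ℕ} (c : Prop) (hc : c) :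
    Nat.card {U : Equiv.Perm (Fin n) // (Good U ∧ OkP U w) ∧ c} = Tc n w := by
  unfold Tc
  exact card_iff_congr (fun U => ⟨fun h => h.1, fun h => ⟨h, hc⟩⟩)

lemma okp_decide_of_false {n : ℕ} (c : Prop) (hc : ¬ c) :
    Nat.card {U : Equiv.Perm (Fin n) // (Good U ∧ OkP U w) ∧ c} = 0 := by
  rw [Nat.card_eq_zero]
  left
  constructor
  rintro ⟨U, -, h⟩
  exact hc h

lemma filter_Icc_eq {v b : ℕ} (hv : 2 ≤ v) :
    Finset.filter (fun w => v ≤ w) (Finset.Icc 2 b) = Finset.Icc v b := by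
  ext w
  simp only [Finset.mem_filter, Finset.mem_Icc]
  omega

lemma sum_shift_eq_Icc (m : ℕ) (f : ℕ → ℕ) :
    ∑ i ∈ Finset.range m, f (i + 2) = ∑ w ∈ Finset.Icc 2 (m + 1), f w := by
  refine Finset.sum_nbij' (fun i => i + 2) (fun w => w - 2) ?_ ?_ ?_ ?_ ?_ <;>
    intros <;> simp_all <;> omega

lemma cK3 (m : ℕ) : Ac (m + 1) = Ac m + Sc m 2 := by
  have h0 : Ac (m + 1) = Nat.card {π : Equiv.Perm (Fin (m + 1)) // Good π ∧ True} := by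
    unfold Ac
    exact card_iff_congr (fun π => ⟨fun h => ⟨h, trivial⟩, fun h => h.1⟩)
  rw [h0, card_decomp m (fun _ => True)]
  have h1 : ∀ w0 : Fin (m + 1),
      Nat.card {U : Equiv.Perm (Fin m) // (Good U ∧ OkP U (w0.1 + 1)) ∧ True}
        = Tc m (w0.1 + 1) := fun w0 => okp_decide_of_true _ trivial
  rw [Finset.sum_congr rfl (fun w0 _ => h1 w0)]
  rw [show ∑ w0 : Fin (m + 1), Tc m (w0.1 + 1)
      = ∑ j ∈ Finset.range (m + 1), Tc m (j + 1) from
    Fin.sum_univ_eq_sum_range (fun j => Tc m (j + 1)) (m + 1)]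
  rw [Finset.sum_range_succ']
  have h2 : ∑ i ∈ Finset.range m, Tc m (i + 1 + 1) = Sc m 2 := by
    unfold Sc
    rw [← sum_shift_eq_Icc m (fun w => Tc m w)]
  rw [h2]
  have h3 : Tc m (0 + 1) = Ac m := by rw [Nat.zero_add, tc_one]
  rw [h3]
  exact Nat.add_comm _ _

lemma cK2a (m : ℕ) {v : ℕ} (hv : 3 ≤ v) : Tc (m + 1) v = Rc m (v - 1) + Sc m v := by
  unfold Tc
  rw [card_decomp m (fun π => OkP π v)]
  have h1 : ∀ w0 : Fin (m + 1),
      Nat.card {U : Equiv.Perm (Fin m) // (Good U ∧ OkP U (w0.1 + 1)) ∧ OkP (app U w0) v}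
        = if w0.1 = 0 then Rc m (v - 1)
          else (if v ≤ w0.1 + 1 then Tc m (w0.1 + 1) else 0) := by
    intro w0
    rcases Nat.eq_zero_or_pos w0.1 with hz | hp
    · rw [if_pos hz]
      unfold Rc
      apply card_iff_congr
      intro U
      constructor
      · rintro ⟨⟨hG, -⟩, hQ⟩
        have := (okp_app_iff_zero U w0 hz hv).1 hQ
        exact ⟨hG, this.2, this.1⟩
      · rintro ⟨hG, hOk, hBE⟩
        exact ⟨⟨hG, by simpa [hz] using okp_one U⟩, (okp_app_iff_zero U w0 hz hv).2 ⟨hBE, hOk⟩⟩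
    · rw [if_neg (by omega)]
      have heq : ∀ U : Equiv.Perm (Fin m),
          ((Good U ∧ OkP U (w0.1 + 1)) ∧ OkP (app U w0) v)
            ↔ ((Good U ∧ OkP U (w0.1 + 1)) ∧ v ≤ w0.1 + 1) := by
        intro U
        constructor
        · rintro ⟨hGO, hQ⟩
          exact ⟨hGO, (okp_app_iff_pos U w0 hp hGO.2 v).1 hQ⟩
        · rintro ⟨hGO, hle⟩
          exact ⟨hGO, (okp_app_iff_pos U w0 hp hGO.2 v).2 hle⟩
      rw [card_iff_congr heq]
      rcases le_or_gt v (w0.1 + 1) with h | h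
      · rw [if_pos h, okp_decide_of_true _ h]
      · rw [if_neg (by omega), okp_decide_of_false _ (by omega)]
  rw [Finset.sum_congr rfl (fun w0 _ => h1 w0)]
  rw [Fin.sum_univ_eq_sum_range
    (fun j => if j = 0 then Rc m (v - 1) else (if v ≤ j + 1 then Tc m (j + 1) else 0)) (m + 1)]
  rw [Finset.sum_range_succ']
  simp only [Nat.succ_ne_zero, if_false, if_pos rfl]
  rw [Nat.add_comm]
  congr 1
  have : ∀ i, (if v ≤ i + 1 + 1 then Tc m (i + 1 + 1) else 0)
      = (fun w => if v ≤ w then Tc m w else 0) (i + 2) := fun i => by norm_num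
  rw [Finset.sum_congr rfl (fun i _ => this i)]
  rw [sum_shift_eq_Icc m (fun w => if v ≤ w then Tc m w else 0)]
  rw [← Finset.sum_filter, filter_Icc_eq (by omega)]
  rfl

lemma cK2b (m : ℕ) {u : ℕ} (hu : 2 ≤ u) : Rc (m + 1) u = Sc m u := by
  unfold Rc
  rw [card_decomp m (fun π => OkP π u ∧ ¬ BE π)]
  have h1 : ∀ w0 : Fin (m + 1),
      Nat.card {U : Equiv.Perm (Fin m) //
          (Good U ∧ OkP U (w0.1 + 1)) ∧ (OkP (app U w0) u ∧ ¬ BE (app U w0))}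
        = if w0.1 = 0 then 0 else (if u ≤ w0.1 + 1 then Tc m (w0.1 + 1) else 0) := by
    intro w0
    rcases Nat.eq_zero_or_pos w0.1 with hz | hp
    · rw [if_pos hz]
      rw [Nat.card_eq_zero]
      left
      constructor
      rintro ⟨U, -, -, hBE⟩
      exact hBE ((be_app_iff U w0).2 hz)
    · rw [if_neg (by omega)]
      have heq : ∀ U : Equiv.Perm (Fin m),
          ((Good U ∧ OkP U (w0.1 + 1)) ∧ (OkP (app U w0) u ∧ ¬ BE (app U w0)))
            ↔ ((Good U ∧ OkP U (w0.1 + 1)) ∧ u ≤ w0.1 + 1) := by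
        intro U
        constructor
        · rintro ⟨hGO, hQ, -⟩
          exact ⟨hGO, (okp_app_iff_pos U w0 hp hGO.2 u).1 hQ⟩
        · rintro ⟨hGO, hle⟩
          refine ⟨hGO, (okp_app_iff_pos U w0 hp hGO.2 u).2 hle, ?_⟩
          rw [be_app_iff U w0]
          omega
      rw [card_iff_congr heq]
      rcases le_or_gt u (w0.1 + 1) with h | h
      · rw [if_pos h, okp_decide_of_true _ h]
      · rw [if_neg (by omega), okp_decide_of_false _ (by omega)]
  rw [Finset.sum_congr rfl (fun w0 _ => h1 w0)]
  rw [Fin.sum_univ_eq_sum_range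
    (fun j => if j = 0 then 0 else (if u ≤ j + 1 then Tc m (j + 1) else 0)) (m + 1)]
  rw [Finset.sum_range_succ']
  simp only [Nat.succ_ne_zero, if_false, if_pos rfl, Nat.add_zero]
  have : ∀ i, (if u ≤ i + 1 + 1 then Tc m (i + 1 + 1) else 0)
      = (fun w => if u ≤ w then Tc m w else 0) (i + 2) := fun i => by norm_num
  rw [Finset.sum_congr rfl (fun i _ => this i)]
  rw [sum_shift_eq_Icc m (fun w => if u ≤ w then Tc m w else 0)]
  rw [← Finset.sum_filter, filter_Icc_eq hu]
  rfl

lemma cA (m : ℕ) {w : ℕ} (hw : 1 ≤ w) : a (m + 1) w = Tc m w := by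
  unfold a
  have hstep : ∀ π : Equiv.Perm (Fin (m + 1)),
      (Avoids1d23 π ∧ Avoids21d3 π ∧
        ∃ h : m + 1 - 1 < m + 1, (π ⟨m + 1 - 1, h⟩).1 + 1 = w)
        ↔ (Good π ∧ uval π m + 1 = w) := by
    intro π
    have hlt : m < m + 1 := Nat.lt_succ_self m
    have hval : uval π m = (π ⟨m, hlt⟩).1 := by simp only [uval, dif_pos hlt]
    constructor
    · rintro ⟨h1, h2, h, hc⟩
      refine ⟨(good_iff π).1 ⟨h1, h2⟩, ?_⟩
      rw [hval]
      exact hc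
    · rintro ⟨hG, hc⟩
      obtain ⟨h1, h2⟩ := (good_iff π).2 hG
      refine ⟨h1, h2, by omega, ?_⟩
      rw [hval] at hc
      exact hc
  rw [card_iff_congr hstep, card_decomp m (fun π => uval π m + 1 = w)]
  have h1 : ∀ w0 : Fin (m + 1),
      Nat.card {U : Equiv.Perm (Fin m) //
          (Good U ∧ OkP U (w0.1 + 1)) ∧ uval (app U w0) m + 1 = w}
        = if w0.1 = w - 1 then Tc m (w0.1 + 1) else 0 := by
    intro w0
    have heq : ∀ U : Equiv.Perm (Fin m),
        ((Good U ∧ OkP U (w0.1 + 1)) ∧ uval (app U w0) m + 1 = w)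
          ↔ ((Good U ∧ OkP U (w0.1 + 1)) ∧ w0.1 = w - 1) := by
      intro U
      rw [uval_app_last]
      constructor
      · rintro ⟨hGO, hc⟩; exact ⟨hGO, by omega⟩
      · rintro ⟨hGO, hc⟩; exact ⟨hGO, by omega⟩
    rw [card_iff_congr heq]
    rcases eq_or_ne w0.1 (w - 1) with h | h
    · rw [if_pos h, okp_decide_of_true _ h]
    · rw [if_neg h, okp_decide_of_false _ h]
  rw [Finset.sum_congr rfl (fun w0 _ => h1 w0)]
  rw [Fin.sum_univ_eq_sum_range
    (fun j => if j = w - 1 then Tc m (j + 1) else 0) (m + 1)]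
  rw [Finset.sum_ite_eq' (Finset.range (m + 1)) (w - 1) (fun j => Tc m (j + 1))]
  rcases le_or_gt w (m + 1) with h | h
  · rw [if_pos (Finset.mem_range.2 (by omega))]
    congr 1
    omega
  · rw [if_neg (by simp [Finset.mem_range]; omega), tc_gt m w h]

lemma ac_zero : Ac 0 = 1 := by
  unfold Ac
  have hall : ∀ U : Equiv.Perm (Fin 0), Good U := fun U j hj => absurd hj (by omega)
  rw [Nat.card_congr (Equiv.subtypeUnivEquiv hall), Nat.card_eq_fintype_card]
  simp

lemma rc_zero (u : ℕ) : Rc 0 u = 0 := by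
  unfold Rc
  rw [Nat.card_eq_zero]
  left
  constructor
  rintro ⟨U, -, -, hBE⟩
  exact hBE (Or.inl rfl)

lemma sc_zero {v : ℕ} (hv : 2 ≤ v) : Sc 0 v = 0 := by
  unfold Sc
  rw [Finset.Icc_eq_empty (by omega), Finset.sum_empty]

lemma sc_gt (n : ℕ) {v : ℕ} (hv : n + 2 ≤ v) : Sc n v = 0 := by
  unfold Sc
  rw [Finset.Icc_eq_empty (by omega), Finset.sum_empty]

lemma sc_step (n : ℕ) {v : ℕ} (hv : v ≤ n + 1) : Sc n v = Tc n v + Sc n (v + 1) := by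
  unfold Sc
  rw [Finset.Icc_eq_cons_Ioc hv, Finset.sum_cons, ← Finset.Icc_add_one_left_eq_Ioc]

end ClMa

open ClMa in
open PowerSeries in
theorem column_generating_functions (M : PowerSeries ℤ)
    (hM0 : PowerSeries.constantCoeff M = 1)
    (hM : M = 1 + PowerSeries.X * M + PowerSeries.X ^ 2 * M ^ 2) :
    PowerSeries.mk (fun n => (a (n + 1) 1 : ℤ)) = M ∧
    ∀ k : ℕ, 1 ≤ k →
      PowerSeries.mk (fun n => (a (n + 1) (k + 1) : ℤ)) =
        PowerSeries.X ^ (2 * (k - 1)) * M ^ (k - 1) * (M - 1) := by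
  -- inverse of 1 + X*M
  set u : PowerSeries ℤ := PowerSeries.invOfUnit (1 + X * M) 1 with hu_def
  have hcc : constantCoeff (1 + X * M) = 1 := by
    simp [map_add, map_mul, constantCoeff_X]
  have hu : (1 + X * M) * u = 1 := PowerSeries.mul_invOfUnit _ 1 (by rw [hcc]; rfl)
  have hM' : M - 1 = X * M + X ^ 2 * M ^ 2 := by linear_combination hM
  set τ : ℕ → PowerSeries ℤ := fun w => X ^ (2 * (w - 2)) * M ^ (w - 2) * (M - 1) with hτ_def
  set σ : ℕ → PowerSeries ℤ := fun w => τ w * (M * u) with hσ_def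
  have hτ2 : τ 2 = M - 1 := by
    rw [hτ_def]; norm_num
  have hτstep : ∀ w, 2 ≤ w → τ (w + 1) = X ^ 2 * M * τ w := by
    intro w hw
    rw [hτ_def]
    simp only
    rw [show w + 1 - 2 = (w - 2) + 1 from by omega]
    rw [show 2 * ((w - 2) + 1) = 2 * (w - 2) + 2 from by ring]
    rw [pow_add, pow_succ]
    ring
  have hMu : M * u * (1 - X ^ 2 * M) = 1 := by
    have h2 : M * (1 - X ^ 2 * M) = 1 + X * M := by linear_combination hM
    calc M * u * (1 - X ^ 2 * M) = M * (1 - X ^ 2 * M) * u := by ring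
    _ = (1 + X * M) * u := by rw [h2]
    _ = 1 := hu
  have hMu2 : M * u * (1 + X * M) = M := by
    calc M * u * (1 + X * M) = M * ((1 + X * M) * u) := by ring
    _ = M := by rw [hu]; ring
  have hσstep : ∀ w, 2 ≤ w → σ w = τ w + σ (w + 1) := by
    intro w hw
    have h3 : σ w - σ (w + 1) = τ w := by
      rw [hσ_def]
      simp only
      rw [hτstep w hw]
      calc τ w * (M * u) - X ^ 2 * M * τ w * (M * u)
          = τ w * (M * u * (1 - X ^ 2 * M)) := by ring
      _ = τ w := by rw [hMu]; ring
    linear_combination h3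
  have hτeq : ∀ w, 3 ≤ w → τ w = X * σ w + X ^ 2 * σ (w - 1) := by
    intro w hw
    have h1 : τ w = X ^ 2 * M * τ (w - 1) := by
      have h := hτstep (w - 1) (by omega)
      rw [show w - 1 + 1 = w from by omega] at h
      exact h
    have h4 : X * σ w + X ^ 2 * σ (w - 1) = X ^ 2 * τ (w - 1) * (M * u * (1 + X * M)) := by
      rw [hσ_def]
      simp only
      rw [h1]
      ring
    rw [h4, hMu2, h1]
    ring
  have hAeq : M = 1 + X * M + X * σ 2 := by
    have h5 : M - 1 = X * M * (1 + X * M) := by linear_combination hM'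
    have h4 : X * σ 2 = X ^ 2 * M ^ 2 := by
      rw [hσ_def]
      simp only
      rw [hτ2, h5]
      calc X * (X * M * (1 + X * M) * (M * u))
          = X ^ 2 * M * (M * u * (1 + X * M)) := by ring
      _ = X ^ 2 * M * M := by rw [hMu2]
      _ = X ^ 2 * M ^ 2 := by ring
    rw [h4]
    exact hM
  -- order (coefficient vanishing) lemmas
  have hdvd : ∀ w, 2 ≤ w → (X : PowerSeries ℤ) ^ (2 * (w - 2) + 1) ∣ τ w := by
    intro w hw
    rw [hτ_def]
    simp only
    rw [pow_succ, mul_assoc]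
    apply mul_dvd_mul_left
    apply dvd_mul_of_dvd_right
    rw [PowerSeries.X_dvd_iff, map_sub, hM0, map_one, sub_self]
  have hcoeffτ : ∀ w n, 2 ≤ w → n ≤ 2 * (w - 2) → (coeff n) (τ w) = 0 := by
    intro w n hw hn
    exact (PowerSeries.X_pow_dvd_iff.1 (hdvd w hw)) n (by omega)
  have hcoeffσ : ∀ w n, 2 ≤ w → n ≤ 2 * (w - 2) → (coeff n) (σ w) = 0 := by
    intro w n hw hn
    have : (X : PowerSeries ℤ) ^ (2 * (w - 2) + 1) ∣ σ w := by
      rw [hσ_def]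
      exact Dvd.dvd.mul_right (hdvd w hw) _
    exact (PowerSeries.X_pow_dvd_iff.1 this) n (by omega)
  have hcoeffXsq : ∀ (f : PowerSeries ℤ) (n : ℕ),
      (coeff (n + 2)) (X ^ 2 * f) = (coeff n) f := by
    intro f n
    exact PowerSeries.coeff_X_pow_mul f 2 n
  have hcoeffXsq1 : ∀ f : PowerSeries ℤ, (coeff 1) (X ^ 2 * f) = 0 := by
    intro f
    refine (PowerSeries.X_pow_dvd_iff.1 (Dvd.intro f rfl)) 1 (by omega)
  -- the master induction
  have key : ∀ n : ℕ, ((Ac n : ℤ) = (coeff n) M) ∧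
      (∀ w, 2 ≤ w → ((Tc n w : ℤ) = (coeff n) (τ w))) ∧
      (∀ w, 2 ≤ w → ((Sc n w : ℤ) = (coeff n) (σ w))) := by
    intro n
    induction n using Nat.strong_induction_on with
    | _ n ih =>
      cases n with
      | zero =>
        refine ⟨?_, ?_, ?_⟩
        · rw [ac_zero, PowerSeries.coeff_zero_eq_constantCoeff, hM0]
          norm_num
        · intro w hw
          rw [tc_gt 0 w (by omega), hcoeffτ w 0 hw (by omega)]
          norm_num
        · intro w hw
          rw [sc_gt 0 (by omega), hcoeffσ w 0 hw (by omega)]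
          norm_num
      | succ m =>
        have ihm := ih m (by omega)
        have hA_eq : (Ac (m + 1) : ℤ) = (coeff (m + 1)) M := by
          rw [cK3 m]
          push_cast
          rw [ihm.1, ihm.2.2 2 le_rfl]
          have hc := congrArg (coeff (m + 1)) hAeq
          rw [map_add, map_add, PowerSeries.coeff_succ_X_mul, PowerSeries.coeff_succ_X_mul,
            PowerSeries.coeff_one, if_neg (Nat.succ_ne_zero m)] at hc
          linarith
        have hT_eq : ∀ w, 2 ≤ w → ((Tc (m + 1) w : ℤ) = (coeff (m + 1)) (τ w)) := by
          intro w hw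
          rcases eq_or_lt_of_le hw with hw2 | hw3
          · subst hw2
            rw [tc_two (m + 1) (by omega), hA_eq, hτ2, map_sub, PowerSeries.coeff_one,
              if_neg (Nat.succ_ne_zero m)]
            ring
          · have hw3' : 3 ≤ w := hw3
            rw [cK2a m hw3']
            push_cast
            have hTc := congrArg (coeff (m + 1)) (hτeq w hw3')
            rw [map_add, PowerSeries.coeff_succ_X_mul] at hTc
            cases m with
            | zero =>
              rw [rc_zero, hcoeffXsq1 (σ (w - 1))] at *
              rw [hTc, ihm.2.2 w hw]
              norm_num
            | succ m' =>
              rw [cK2b m' (show 2 ≤ w - 1 from by omega)]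
              have ihm' := ih m' (by omega)
              rw [show m' + 1 + 1 = m' + 2 from rfl, hcoeffXsq (σ (w - 1)) m'] at hTc
              push_cast
              rw [ihm'.2.2 (w - 1) (by omega), ihm.2.2 w hw, hTc]
              ring
        have hS_eq : ∀ w, 2 ≤ w → ((Sc (m + 1) w : ℤ) = (coeff (m + 1)) (σ w)) := by
          have haux : ∀ d w, 2 ≤ w → m + 3 ≤ w + d →
              ((Sc (m + 1) w : ℤ) = (coeff (m + 1)) (σ w)) := by
            intro d
            induction d with
            | zero =>
              intro w hw hle
              rw [sc_gt (m + 1) (by omega), hcoeffσ w (m + 1) hw (by omega)]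
              norm_num
            | succ d ihd =>
              intro w hw hle
              rcases le_or_gt (m + 3) w with hbig | hsmall
              · rw [sc_gt (m + 1) (by omega), hcoeffσ w (m + 1) hw (by omega)]
                norm_num
              · rw [sc_step (m + 1) (show w ≤ m + 2 from by omega)]
                push_cast
                rw [hT_eq w hw, ihd (w + 1) (by omega) (by omega)]
                have hc := congrArg (coeff (m + 1)) (hσstep w hw)
                rw [map_add] at hc
                linarith
          intro w hw
          exact haux (m + 3) w hw (by omega)
        exact ⟨hA_eq, hT_eq, hS_eq⟩
  constructor
  · apply PowerSeries.ext
    intro n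
    rw [PowerSeries.coeff_mk, cA n (le_refl 1), tc_one n]
    exact (key n).1
  · intro k hk
    apply PowerSeries.ext
    intro n
    rw [PowerSeries.coeff_mk, cA n (show 1 ≤ k + 1 from by omega),
      (key n).2.1 (k + 1) (by omega)]
    have hτk : τ (k + 1) = X ^ (2 * (k - 1)) * M ^ (k - 1) * (M - 1) := by
      rw [hτ_def]
      simp only
      rw [show k + 1 - 2 = k - 1 from by omega]
    rw [hτk]
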